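/- Let σ ≥ 2, k ≥ 2, and let T = b_1 a^k $ b_2 a^k $ ⋯ b_σ a^k $ over the alphabet {$, a, b_1, ..., b_σ} of σ+2 distinct letters, where a^k denotes k copies of a. Then the set of maximal repeats of T is exactly {ε, a, aa, ..., a^{k−1}, a^k $}. -/

import Mathlib

open Finset

variable {α : Type*}

/-- Number of occurrences of `S` in `T`: positions `i` with `T[i..i+|S|-1] = S`. -/
def occ [DecidableEq α] (T S : List α) : ℕ :=
  ((Finset.range (T.length + 1)).filter fun i => (T.drop i).take S.length = S).card

/-- `S` is a maximal repeat of `T`. -/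
def MaxRepeat [DecidableEq α] (T S : List α) : Prop :=
  2 ≤ occ T S ∧ ∀ a : α, occ T (a :: S) < occ T S ∧ occ T (S ++ [a]) < occ T S

instance [DecidableEq α] [Fintype α] (T S : List α) : Decidable (MaxRepeat T S) := by
  unfold MaxRepeat; infer_instance

/-- The finite set of maximal repeats of `T`. -/
def MRset [DecidableEq α] [Fintype α] (T : List α) : Finset (List α) :=
  (T.tails.flatMap List.inits).toFinset.filter fun S => MaxRepeat T S

/-- Number of right extensions of `S` in `T`. -/
def rext [DecidableEq α] [Fintype α] (T S : List α) : ℕ :=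
  (Finset.univ.filter fun a : α => (S ++ [a]) <:+: T).card

/-- Number of left extensions of `S` in `T`. -/
def lext [DecidableEq α] [Fintype α] (T S : List α) : ℕ :=
  (Finset.univ.filter fun a : α => (a :: S) <:+: T).card

/-- Total number of right extensions of maximal repeats of `T`. -/
def er [DecidableEq α] [Fintype α] (T : List α) : ℕ := ∑ S ∈ MRset T, rext T S

/-- Total number of left extensions of maximal repeats of `T`. -/
def el [DecidableEq α] [Fintype α] (T : List α) : ℕ := ∑ S ∈ MRset T, lext T S

/-- Alphabet `{$, a, b_1, …, b_σ}` of size `σ + 2`. -/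
abbrev Alph (σ : ℕ) := Unit ⊕ Unit ⊕ Fin σ

/-- The letter `$`. -/
def dol (σ : ℕ) : Alph σ := Sum.inl ()

/-- The letter `a`. -/
def la (σ : ℕ) : Alph σ := Sum.inr (Sum.inl ())

/-- The letter `b_{j+1}`. -/
def lb (σ : ℕ) (j : Fin σ) : Alph σ := Sum.inr (Sum.inr j)

/-- The string `T = b_1 a^k $ b_2 a^k $ ⋯ b_σ a^k $`. -/
def W (σ k : ℕ) : List (Alph σ) :=
  (List.finRange σ).flatMap fun j =>
    lb σ j :: (List.replicate k (la σ) ++ [dol σ])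

section AuxOcc
variable [DecidableEq α]

theorem occ_eq_card_prefix (T S : List α) :
    occ T S = ((Finset.range (T.length + 1)).filter fun i => S <+: T.drop i).card := by
  unfold occ
  congr 1
  ext i
  simp only [Finset.mem_filter, List.prefix_iff_eq_take, eq_comm]

theorem occ_nil (S : List α) : occ [] S = if S = [] then 1 else 0 := by
  rw [occ_eq_card_prefix]
  simp only [List.length_nil, Nat.zero_add, Finset.range_one]
  split_ifs with h
  · subst h; simp
  · rw [Finset.filter_singleton]
    simp [List.prefix_iff_eq_take]
    intro h'
    exact absurd h'.symm (by simpa using h)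

theorem occ_cons (t : α) (T S : List α) :
    occ (t :: T) S = (if S <+: (t :: T) then 1 else 0) + occ T S := by
  rw [occ_eq_card_prefix, occ_eq_card_prefix]
  rw [Finset.card_filter, Finset.card_filter]
  rw [List.length_cons]
  rw [Finset.sum_range_succ']
  simp only [List.drop_succ_cons, List.drop_zero]
  omega

theorem occ_empty (T : List α) : occ T [] = T.length + 1 := by
  induction T with
  | nil => simp [occ_nil]
  | cons t T ih => rw [occ_cons, ih]; simp; omega

theorem occ_le_length {S : List α} (T : List α) (hS : S ≠ []) : occ T S ≤ T.length := by
  induction T with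
  | nil => simp [occ_nil, hS]
  | cons t T ih =>
    rw [occ_cons]
    split_ifs <;> simp <;> omega

theorem occ_le_of_prefix {S S' : List α} (T : List α) (h : S <+: S') :
    occ T S' ≤ occ T S := by
  induction T with
  | nil =>
    rw [occ_nil, occ_nil]
    split_ifs with h1 h2 <;> try omega
    · subst h1; rw [List.prefix_nil] at h; exact absurd h h2
  | cons t T ih =>
    rw [occ_cons, occ_cons]
    have : (if S' <+: (t :: T) then 1 else 0) ≤ (if S <+: (t :: T) then 1 else 0) := by
      split_ifs with h1 h2 <;> try omega
      exact absurd (h.trans h1) h2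
    omega

theorem occ_le_card (T S : List α) : occ T S ≤ T.length + 1 := by
  rw [occ_eq_card_prefix]
  calc _ ≤ (Finset.range (T.length + 1)).card := Finset.card_filter_le _ _
    _ = T.length + 1 := Finset.card_range _

theorem occ_drop_le {S : List α} (T : List α) (m : ℕ) : occ T S ≤ occ T (S.drop m) := by
  by_cases hm : S.length ≤ m
  · rw [List.drop_eq_nil_of_le hm, occ_empty]; exact occ_le_card T S
  rw [occ_eq_card_prefix, occ_eq_card_prefix]
  apply Finset.card_le_card_of_injOn (fun i => i + m)
  · intro i hi
    simp only [Finset.mem_coe, Finset.mem_filter, Finset.mem_range] at hi ⊢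
    obtain ⟨hi1, hi2⟩ := hi
    have hlen : S.length ≤ (T.drop i).length := hi2.length_le
    rw [List.length_drop] at hlen
    constructor
    · omega
    · have := hi2.drop m
      simpa [List.drop_drop, Nat.add_comm] using this
  · intro x _ y _ h
    simpa using h

section Blocks
variable {c x : α} (hca : c ≠ x)

/-- `x^i <+: x^m ++ c :: M ↔ i ≤ m` when `c ≠ x`. -/
theorem P1 (hca : c ≠ x) : ∀ (m i : ℕ) (M : List α),
    (List.replicate i x <+: List.replicate m x ++ c :: M) ↔ i ≤ m := by
  intro m
  induction m with
  | zero =>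
    intro i M
    cases i with
    | zero => simp
    | succ i =>
      simp only [List.replicate_succ, List.replicate_zero, List.nil_append,
        List.cons_prefix_cons]
      constructor
      · rintro ⟨h, -⟩; exact absurd h.symm hca
      · omega
  | succ m ih =>
    intro i M
    cases i with
    | zero => simp
    | succ i =>
      simp only [List.replicate_succ, List.cons_append, List.cons_prefix_cons,
        true_and, ih i M]
      omega

/-- `x^i ++ [c] <+: x^m ++ c :: M ↔ i = m` when `c ≠ x`. -/
theorem P2 (hca : c ≠ x) : ∀ (m i : ℕ) (M : List α),
    (List.replicate i x ++ [c] <+: List.replicate m x ++ c :: M) ↔ i = m := by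
  intro m
  induction m with
  | zero =>
    intro i M
    cases i with
    | zero => simp
    | succ i =>
      simp only [List.replicate_succ, List.replicate_zero, List.nil_append,
        List.cons_append, List.cons_prefix_cons]
      constructor
      · rintro ⟨h, -⟩; exact absurd h.symm hca
      · omega
  | succ m ih =>
    intro i M
    cases i with
    | zero =>
      simp only [List.replicate_zero, List.nil_append, List.replicate_succ,
        List.cons_append, List.cons_prefix_cons]
      constructor
      · rintro ⟨h, -⟩; exact absurd h hca
      · omega
    | succ i =>
      simp only [List.replicate_succ, List.cons_append, List.cons_prefix_cons,
        true_and, ih i M]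
      omega

/-- skip a letter that can't start `S`. -/
theorem occ_cons_ne {y : α} {S' : List α} (M : List α) (h : y ≠ x) :
    occ (x :: M) (y :: S') = occ M (y :: S') := by
  rw [occ_cons]
  have : ¬ (y :: S' <+: x :: M) := by
    rw [List.cons_prefix_cons]; rintro ⟨h1, -⟩; exact h h1
  simp [this]

/-- skip a run of `x`'s when `S` starts with `y ≠ x`. -/
theorem occ_replicate_append_ne {y : α} {S' : List α} (h : y ≠ x) :
    ∀ (m : ℕ) (M : List α),
    occ (List.replicate m x ++ M) (y :: S') = occ M (y :: S') := by
  intro m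
  induction m with
  | zero => simp
  | succ m ih =>
    intro M
    rw [List.replicate_succ, List.cons_append, occ_cons_ne _ h, ih]

/-- occurrences of `x^i` (i ≥ 1) in `x^m ++ c :: M`. -/
theorem H1 {i : ℕ} (hca : c ≠ x) (hi : 1 ≤ i) : ∀ (m : ℕ) (M : List α),
    occ (List.replicate m x ++ c :: M) (List.replicate i x)
      = (m + 1 - i) + occ M (List.replicate i x) := by
  intro m
  induction m with
  | zero =>
    intro M
    obtain ⟨i, rfl⟩ : ∃ j, i = j + 1 := ⟨i - 1, by omega⟩
    simp only [List.replicate_zero, List.nil_append, List.replicate_succ]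
    rw [occ_cons_ne _ (fun h => hca h.symm)]
    omega
  | succ m ih =>
    intro M
    rw [List.replicate_succ, List.cons_append, occ_cons, ih M]
    rw [show (List.replicate m x ++ c :: M : List α) = List.replicate m x ++ c :: M from rfl]
    have hp : (List.replicate i x <+: x :: (List.replicate m x ++ c :: M)) ↔ i ≤ m + 1 := by
      rw [show (x :: (List.replicate m x ++ c :: M) : List α)
          = List.replicate (m+1) x ++ c :: M by rw [List.replicate_succ, List.cons_append]]
      exact P1 hca (m+1) i M
    rw [if_congr hp rfl rfl]
    split_ifs <;> omega

/-- occurrences of `x^i ++ [c]` in `x^m ++ c :: M`. -/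
theorem H2 {i : ℕ} (hca : c ≠ x) : ∀ (m : ℕ) (M : List α),
    occ (List.replicate m x ++ c :: M) (List.replicate i x ++ [c])
      = (if i ≤ m then 1 else 0) + occ M (List.replicate i x ++ [c]) := by
  intro m
  induction m with
  | zero =>
    intro M
    rw [List.replicate_zero, List.nil_append, occ_cons]
    have hp : (List.replicate i x ++ [c] <+: c :: M) ↔ i = 0 := by
      have := P2 hca 0 i M
      simpa using this
    rw [if_congr hp rfl rfl]
    split_ifs <;> omega
  | succ m ih =>
    intro M
    rw [List.replicate_succ, List.cons_append, occ_cons, ih M]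
    have hp : (List.replicate i x ++ [c] <+: x :: (List.replicate m x ++ c :: M)) ↔ i = m + 1 := by
      rw [show (x :: (List.replicate m x ++ c :: M) : List α)
          = List.replicate (m+1) x ++ c :: M by rw [List.replicate_succ, List.cons_append]]
      exact P2 hca (m+1) i M
    rw [if_congr hp rfl rfl]
    split_ifs <;> omega

end Blocks


end AuxOcc

namespace WFacts

variable {σ k : ℕ}

theorem dol_ne_la : dol σ ≠ la σ := by simp [dol, la]
theorem la_ne_dol : la σ ≠ dol σ := by simp [dol, la]
theorem lb_ne_la (j : Fin σ) : lb σ j ≠ la σ := by simp [lb, la]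
theorem la_ne_lb (j : Fin σ) : la σ ≠ lb σ j := by simp [lb, la]
theorem lb_ne_dol (j : Fin σ) : lb σ j ≠ dol σ := by simp [lb, dol]
theorem dol_ne_lb (j : Fin σ) : dol σ ≠ lb σ j := by simp [lb, dol]

/-- suffix of `W` starting at block list `L`. -/
def WB (σ k : ℕ) (L : List (Fin σ)) : List (Alph σ) :=
  L.flatMap fun j => lb σ j :: (List.replicate k (la σ) ++ [dol σ])

theorem WB_cons (j : Fin σ) (L : List (Fin σ)) :
    WB σ k (j :: L) = lb σ j :: (List.replicate k (la σ) ++ dol σ :: WB σ k L) := by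
  simp [WB, List.flatMap_cons]

theorem WB_nil : WB σ k ([] : List (Fin σ)) = [] := rfl

theorem W_eq : W σ k = WB σ k (List.finRange σ) := rfl

theorem WB_length (L : List (Fin σ)) : (WB σ k L).length = L.length * (k + 2) := by
  induction L with
  | nil => simp [WB_nil]
  | cons j L ih => rw [WB_cons]; simp [ih]; ring

/-- head of WB is a `b` letter or the list is empty; used for `[d,x]` analysis. -/
theorem G_dx (x : Alph σ) (hx : ∀ j, x ≠ lb σ j) (L : List (Fin σ)) :
    occ (WB σ k L) [dol σ, x] = 0 := by
  induction L with
  | nil => simp [WB_nil, occ_nil]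
  | cons j L ih =>
    rw [WB_cons, occ_cons_ne _ (dol_ne_lb j),
      occ_replicate_append_ne dol_ne_la, occ_cons, ih]
    have : ¬ ([dol σ, x] <+: dol σ :: WB σ k L) := by
      rw [List.cons_prefix_cons]
      rintro ⟨-, h2⟩
      cases hL : WB σ k L with
      | nil => rw [hL] at h2; simp at h2
      | cons y M =>
        rw [hL] at h2
        rw [List.cons_prefix_cons] at h2
        obtain ⟨h2, -⟩ := h2
        cases L with
        | nil => simp [WB_nil] at hL
        | cons j' L' =>
          rw [WB_cons] at hL
          injection hL with hL1 _
          exact hx j' (by rw [h2, ← hL1])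
    simp [this]

theorem G_rep {i : ℕ} (hi : 1 ≤ i) (L : List (Fin σ)) :
    occ (WB σ k L) (List.replicate i (la σ)) = L.length * (k + 1 - i) := by
  induction L with
  | nil =>
    rw [WB_nil, occ_nil]
    have : List.replicate i (la σ) ≠ [] := by simp; omega
    simp [this]
  | cons j L ih =>
    rw [WB_cons]
    obtain ⟨i', rfl⟩ : ∃ j, i = j + 1 := ⟨i - 1, by omega⟩
    rw [List.replicate_succ]
    rw [occ_cons_ne _ (la_ne_lb j)]
    rw [← List.replicate_succ]
    rw [H1 dol_ne_la hi k _]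
    rw [ih]
    simp only [List.length_cons]
    ring

theorem G_repd {i : ℕ} (L : List (Fin σ)) :
    occ (WB σ k L) (List.replicate i (la σ) ++ [dol σ])
      = L.length * (if i ≤ k then 1 else 0) := by
  induction L with
  | nil => simp [WB_nil, occ_nil]
  | cons j L ih =>
    rw [WB_cons]
    have step : occ (lb σ j :: (List.replicate k (la σ) ++ dol σ :: WB σ k L))
        (List.replicate i (la σ) ++ [dol σ])
        = occ (List.replicate k (la σ) ++ dol σ :: WB σ k L)
          (List.replicate i (la σ) ++ [dol σ]) := by
      cases i with
      | zero =>
        simp only [List.replicate_zero, List.nil_append]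
        exact occ_cons_ne _ (dol_ne_lb j)
      | succ i =>
        rw [List.replicate_succ, List.cons_append]
        exact occ_cons_ne _ (la_ne_lb j)
    rw [step, H2 dol_ne_la k _, ih]
    simp only [List.length_cons]
    ring

theorem G_b (j : Fin σ) (L : List (Fin σ)) :
    occ (WB σ k L) [lb σ j] = L.count j := by
  induction L with
  | nil => simp [WB_nil, occ_nil]
  | cons j' L ih =>
    rw [WB_cons, occ_cons, occ_replicate_append_ne (lb_ne_la j),
      occ_cons_ne _ (lb_ne_dol j), ih]
    have hp : ([lb σ j] <+: lb σ j' :: (List.replicate k (la σ) ++ dol σ :: WB σ k L))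
        ↔ j = j' := by
      rw [List.cons_prefix_cons]
      constructor
      · rintro ⟨h, -⟩; simpa [lb] using h
      · rintro rfl; simp
    rw [if_congr hp rfl rfl, List.count_cons]
    simp only [beq_iff_eq]
    split_ifs <;> omega

end WFacts

namespace WFacts
variable {σ k : ℕ}

theorem count_finRange (j : Fin σ) : (List.finRange σ).count j = 1 :=
  List.count_eq_one_of_mem (List.nodup_finRange σ) (List.mem_finRange j)

theorem occW_rep {i : ℕ} (hi : 1 ≤ i) :
    occ (W σ k) (List.replicate i (la σ)) = σ * (k + 1 - i) := by
  rw [W_eq, G_rep hi, List.length_finRange]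

theorem occW_repd (i : ℕ) :
    occ (W σ k) (List.replicate i (la σ) ++ [dol σ]) = σ * (if i ≤ k then 1 else 0) := by
  rw [W_eq, G_repd, List.length_finRange]

theorem occW_b (j : Fin σ) : occ (W σ k) [lb σ j] = 1 := by
  rw [W_eq, G_b, count_finRange]

theorem occW_da : occ (W σ k) [dol σ, la σ] = 0 := by
  rw [W_eq]; exact G_dx _ (fun j => la_ne_lb j) _

theorem occW_dd : occ (W σ k) [dol σ, dol σ] = 0 := by
  rw [W_eq]; exact G_dx _ (fun j => dol_ne_lb j) _

theorem occW_len : (W σ k).length = σ * (k + 2) := by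
  rw [W_eq, WB_length, List.length_finRange]

theorem occ_le_one_of_mem_b {S : List (Alph σ)} {j : Fin σ} (h : lb σ j ∈ S) :
    occ (W σ k) S ≤ 1 := by
  obtain ⟨s, t, rfl⟩ := List.append_of_mem h
  calc occ (W σ k) (s ++ lb σ j :: t)
      ≤ occ (W σ k) ((s ++ lb σ j :: t).drop s.length) := occ_drop_le _ _
    _ = occ (W σ k) (lb σ j :: t) := by rw [List.drop_left]
    _ ≤ occ (W σ k) [lb σ j] := occ_le_of_prefix _ ⟨t, rfl⟩
    _ = 1 := occW_b j

theorem DEC : ∀ (S : List (Alph σ)), (∀ x ∈ S, x = la σ ∨ x = dol σ) →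
    ∃ i R, S = List.replicate i (la σ) ++ R ∧ (R = [] ∨ ∃ R', R = dol σ :: R') := by
  intro S
  induction S with
  | nil => exact fun _ => ⟨0, [], rfl, Or.inl rfl⟩
  | cons x S' ih =>
    intro h
    rcases h x (by simp) with rfl | rfl
    · obtain ⟨i, R, hSR, hR⟩ := ih (fun y hy => h y (by simp [hy]))
      exact ⟨i + 1, R, by rw [List.replicate_succ, List.cons_append, ← hSR], hR⟩
    · exact ⟨0, dol σ :: S', rfl, Or.inr ⟨S', rfl⟩⟩

end WFacts


open WFacts in
/-- the maximal repeats of `T = b_1 a^k $ ⋯ b_σ a^k $` are exactly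
`ε, a, aa, …, a^{k-1}, a^k $`. -/
theorem maximal_repeats_W (σ k : ℕ) (hσ : 2 ≤ σ) (hk : 2 ≤ k) (S : List (Alph σ)) :
    MaxRepeat (W σ k) S ↔
      S = [] ∨ (∃ i, 1 ≤ i ∧ i ≤ k - 1 ∧ S = List.replicate i (la σ)) ∨
      S = List.replicate k (la σ) ++ [dol σ] := by
  have hlen : (W σ k).length = σ * (k + 2) := occW_len
  have hlen8 : 2 * 4 ≤ σ * (k + 2) := Nat.mul_le_mul hσ (by omega : 4 ≤ k + 2)
  constructor
  · rintro ⟨h2, hext⟩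
    have hel : ∀ x ∈ S, x = la σ ∨ x = dol σ := by
      intro x hx
      rcases x with ⟨⟩ | ⟨⟩ | j
      · exact Or.inr rfl
      · exact Or.inl rfl
      · have hb : lb σ j ∈ S := hx
        have := occ_le_one_of_mem_b (k := k) hb
        omega
    obtain ⟨i, R, rfl, hR⟩ := DEC S hel
    rcases hR with rfl | ⟨R', rfl⟩
    · -- S = a^i
      simp only [List.append_nil] at h2 hext ⊢
      rcases Nat.eq_zero_or_pos i with rfl | hi
      · left; simp
      by_cases hik : i ≤ k - 1
      · exact Or.inr (Or.inl ⟨i, hi, hik, rfl⟩)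
      exfalso
      by_cases hik2 : i ≤ k
      · have h1 := (hext (dol σ)).2
        rw [occW_repd, occW_rep hi, if_pos hik2] at h1
        have e1 : k + 1 - i = 1 := by omega
        rw [e1] at h1
        omega
      · have h0 := occW_rep (σ := σ) (k := k) hi
        have e0 : k + 1 - i = 0 := by omega
        rw [e0, Nat.mul_zero] at h0
        omega
    · cases R' with
      | nil =>
        -- S = a^i ++ [$]
        by_cases hik : i = k
        · subst hik; exact Or.inr (Or.inr rfl)
        exfalso
        by_cases hik2 : i ≤ k
        · have h1 := (hext (la σ)).1
          rw [show la σ :: (List.replicate i (la σ) ++ [dol σ])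
              = List.replicate (i + 1) (la σ) ++ [dol σ] by
            rw [List.replicate_succ, List.cons_append]] at h1
          rw [occW_repd, occW_repd] at h1
          rw [if_pos hik2, if_pos (by omega : i + 1 ≤ k)] at h1
          omega
        · have h0 := occW_repd (σ := σ) (k := k) i
          rw [if_neg hik2, Nat.mul_zero] at h0
          omega
      | cons x R'' =>
        exfalso
        have hx : x = la σ ∨ x = dol σ := hel x (by simp)
        have hd1 : occ (W σ k) (List.replicate i (la σ) ++ dol σ :: x :: R'')
            ≤ occ (W σ k) [dol σ, x] := by
          calc occ (W σ k) (List.replicate i (la σ) ++ dol σ :: x :: R'')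
              ≤ occ (W σ k) ((List.replicate i (la σ) ++ dol σ :: x :: R'').drop
                  (List.replicate i (la σ)).length) := occ_drop_le _ _
            _ = occ (W σ k) (dol σ :: x :: R'') := by rw [List.drop_left]
            _ ≤ occ (W σ k) [dol σ, x] := occ_le_of_prefix _ ⟨R'', rfl⟩
        have h0 : occ (W σ k) [dol σ, x] = 0 := by
          rcases hx with rfl | rfl
          · exact occW_da
          · exact occW_dd
        omega
  · rintro (rfl | ⟨i, hi1, hik, rfl⟩ | rfl)
    · -- S = []
      constructor
      · rw [occ_empty]; omega
      intro c
      have hc1 : occ (W σ k) [c] ≤ (W σ k).length := occ_le_length _ (by simp)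
      have he : occ (W σ k) ([] : List (Alph σ)) = (W σ k).length + 1 := occ_empty _
      constructor
      · simpa [he] using Nat.lt_succ_of_le hc1
      · simpa [he] using Nat.lt_succ_of_le hc1
    · -- S = a^i, 1 ≤ i ≤ k-1
      have hq : 2 ≤ k + 1 - i := by omega
      have hocc : occ (W σ k) (List.replicate i (la σ)) = σ * (k + 1 - i) := occW_rep hi1
      have h4 : 2 * 2 ≤ σ * (k + 1 - i) := Nat.mul_le_mul hσ hq
      refine ⟨by omega, ?_⟩
      intro c
      have hrepsucc : occ (W σ k) (List.replicate (i + 1) (la σ)) = σ * (k + 1 - (i + 1)) :=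
        occW_rep (by omega)
      have hstep : σ * (k + 1 - (i + 1)) < σ * (k + 1 - i) := by
        have hA : k + 1 - i = (k + 1 - (i + 1)) + 1 := by omega
        rw [hA, Nat.mul_succ]
        omega
      rcases c with ⟨⟩ | ⟨⟩ | j
      · -- c = dol
        have e1 : (Sum.inl () : Alph σ) = dol σ := rfl
        constructor
        · rw [e1]
          have hpre : [dol σ, la σ] <+: dol σ :: List.replicate i (la σ) := by
            obtain ⟨i', rfl⟩ : ∃ j, i = j + 1 := ⟨i - 1, by omega⟩
            rw [List.replicate_succ]
            exact ⟨List.replicate i' (la σ), rfl⟩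
          have := (occ_le_of_prefix (W σ k) hpre).trans_eq occW_da
          omega
        · have h1 : occ (W σ k) (List.replicate i (la σ) ++ [dol σ]) = σ * 1 := by
            rw [occW_repd, if_pos (by omega : i ≤ k)]
          have h2' : σ * 2 ≤ σ * (k + 1 - i) := Nat.mul_le_mul_left σ hq
          have : (Sum.inl () : Alph σ) = dol σ := rfl
          rw [this, h1, hocc]
          omega
      · -- c = la
        have e1 : (Sum.inr (Sum.inl ()) : Alph σ) = la σ := rfl
        constructor
        · rw [e1, show la σ :: List.replicate i (la σ) = List.replicate (i + 1) (la σ) from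
            List.replicate_succ.symm, hrepsucc, hocc]
          exact hstep
        · rw [e1, show List.replicate i (la σ) ++ [la σ] = List.replicate (i + 1) (la σ) from
            List.replicate_succ'.symm, hrepsucc, hocc]
          exact hstep
      · -- c = lb j
        have e1 : (Sum.inr (Sum.inr j) : Alph σ) = lb σ j := rfl
        constructor
        · rw [e1]
          have : occ (W σ k) (lb σ j :: List.replicate i (la σ)) ≤ 1 :=
            occ_le_one_of_mem_b List.mem_cons_self
          omega
        · rw [e1]
          have : occ (W σ k) (List.replicate i (la σ) ++ [lb σ j]) ≤ 1 :=
            occ_le_one_of_mem_b (List.mem_append_right _ (List.mem_singleton_self _))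
          omega
    · -- S = a^k ++ [$]
      have hocc : occ (W σ k) (List.replicate k (la σ) ++ [dol σ]) = σ := by
        rw [occW_repd, if_pos le_rfl, Nat.mul_one]
      refine ⟨by omega, ?_⟩
      intro c
      have hpre_da : [dol σ, la σ] <+: dol σ :: (List.replicate k (la σ) ++ [dol σ]) := by
        obtain ⟨k', rfl⟩ : ∃ j, k = j + 1 := ⟨k - 1, by omega⟩
        rw [List.replicate_succ, List.cons_append]
        exact ⟨List.replicate k' (la σ) ++ [dol σ], rfl⟩
      rcases c with ⟨⟩ | ⟨⟩ | j
      · -- c = dol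
        have e1 : (Sum.inl () : Alph σ) = dol σ := rfl
        constructor
        · rw [e1]
          have := (occ_le_of_prefix (W σ k) hpre_da).trans_eq occW_da
          omega
        · rw [e1]
          have hd : occ (W σ k) ((List.replicate k (la σ) ++ [dol σ]) ++ [dol σ])
              ≤ occ (W σ k) [dol σ, dol σ] := by
            calc occ (W σ k) ((List.replicate k (la σ) ++ [dol σ]) ++ [dol σ])
                = occ (W σ k) (List.replicate k (la σ) ++ [dol σ, dol σ]) := by
                  rw [List.append_assoc]; rfl
              _ ≤ occ (W σ k) ((List.replicate k (la σ) ++ [dol σ, dol σ]).drop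
                    (List.replicate k (la σ)).length) := occ_drop_le _ _
              _ = occ (W σ k) [dol σ, dol σ] := by rw [List.drop_left]
          have h0 := occW_dd (σ := σ) (k := k)
          omega
      · -- c = la
        have e1 : (Sum.inr (Sum.inl ()) : Alph σ) = la σ := rfl
        constructor
        · rw [e1, show la σ :: (List.replicate k (la σ) ++ [dol σ])
              = List.replicate (k + 1) (la σ) ++ [dol σ] by
            rw [List.replicate_succ, List.cons_append]]
          rw [occW_repd, if_neg (by omega), Nat.mul_zero, hocc]
          omega
        · rw [e1]
          have hd : occ (W σ k) ((List.replicate k (la σ) ++ [dol σ]) ++ [la σ])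
              ≤ occ (W σ k) [dol σ, la σ] := by
            calc occ (W σ k) ((List.replicate k (la σ) ++ [dol σ]) ++ [la σ])
                = occ (W σ k) (List.replicate k (la σ) ++ [dol σ, la σ]) := by
                  rw [List.append_assoc]; rfl
              _ ≤ occ (W σ k) ((List.replicate k (la σ) ++ [dol σ, la σ]).drop
                    (List.replicate k (la σ)).length) := occ_drop_le _ _
              _ = occ (W σ k) [dol σ, la σ] := by rw [List.drop_left]
          have h0 := occW_da (σ := σ) (k := k)
          omega
      · -- c = lb j
        have e1 : (Sum.inr (Sum.inr j) : Alph σ) = lb σ j := rfl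
        constructor
        · rw [e1]
          have : occ (W σ k) (lb σ j :: (List.replicate k (la σ) ++ [dol σ])) ≤ 1 :=
            occ_le_one_of_mem_b List.mem_cons_self
          omega
        · rw [e1]
          have : occ (W σ k) ((List.replicate k (la σ) ++ [dol σ]) ++ [lb σ j]) ≤ 1 :=
            occ_le_one_of_mem_b (List.mem_append_right _ (List.mem_singleton_self _))
          omega
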